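/- Let a and ω be real numbers and let w₀, w₁ ∈ L²(0,1). Define w on (a−1, a+1) by w(t) = (w₀(a−t) − w₁(a−t))/2 for t ∈ (a−1, a) and w(t) = (w₀(t−a) + w₁(t−a))/2 for t ∈ (a, a+1). Then for every nonzero complex ρ with cos(ρa) and sin(ρa) defined as entire functions, the identity (sin ρ/ρ − ω cos ρ/(2ρ²) + ρ⁻²∫₀¹ w₀(t) cos(ρt) dt)·cos(ρa) − (cos ρ + ω sin ρ/(2ρ) + ρ⁻¹∫₀¹ w₁(t) sin(ρt) dt)·sin(ρa)/ρ = sin(ρ(1−a))/ρ − ω cos(ρ(1−a))/(2ρ²) + ρ⁻²∫_{a−1}^{a+1} w(t) cos(ρt) dt holds. -/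

import Mathlib

open Real MeasureTheory intervalIntegral Set

lemma key_int (w : ℝ → ℂ) (hw : MemLp w 2 (volume.restrict (Set.Ioc (0:ℝ) 1)))
    (φ : ℝ → ℂ) (hφ : Continuous φ) :
    IntervalIntegrable (fun t => w t * φ t) volume 0 1 := by
  rw [intervalIntegrable_iff_integrableOn_Ioc_of_le (by norm_num)]
  haveI : IsFiniteMeasure (volume.restrict (Set.Ioc (0:ℝ) 1)) := by
    constructor
    simp [Measure.restrict_apply_univ, Real.volume_Ioc]
  have hwi : Integrable w (volume.restrict (Set.Ioc (0:ℝ) 1)) :=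
    hw.integrable (by norm_num)
  obtain ⟨C, hC⟩ := (isCompact_Icc (a := (0:ℝ)) (b := 1)).exists_bound_of_continuousOn
    hφ.continuousOn
  have hb : ∀ᵐ x ∂(volume.restrict (Set.Ioc (0:ℝ) 1)), ‖φ x‖ ≤ C := by
    filter_upwards [ae_restrict_mem measurableSet_Ioc] with x hx
    exact hC x (Set.Ioc_subset_Icc_self hx)
  have := hwi.bdd_mul (c := C) (hφ.aestronglyMeasurable.restrict) hb
  exact this.congr (by filter_upwards with x using mul_comm _ _)

theorem stmt_5 (a ω : ℝ) (w₀ w₁ w : ℝ → ℂ)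
    (hw₀ : MeasureTheory.MemLp w₀ 2 (volume.restrict (Set.Ioc (0:ℝ) 1)))
    (hw₁ : MeasureTheory.MemLp w₁ 2 (volume.restrict (Set.Ioc (0:ℝ) 1)))
    (hwL : ∀ t ∈ Set.Ioo (a - 1) a, w t = (w₀ (a - t) - w₁ (a - t)) / 2)
    (hwR : ∀ t ∈ Set.Ioo a (a + 1), w t = (w₀ (t - a) + w₁ (t - a)) / 2)
    (ρ : ℂ) (hρ : ρ ≠ 0) :
    (Complex.sin ρ / ρ - (ω : ℂ) * Complex.cos ρ / (2 * ρ ^ 2)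
        + ρ⁻¹ ^ 2 * ∫ t in (0:ℝ)..1, w₀ t * Complex.cos (ρ * t)) * Complex.cos (ρ * a)
      - (Complex.cos ρ + (ω : ℂ) * Complex.sin ρ / (2 * ρ)
        + ρ⁻¹ * ∫ t in (0:ℝ)..1, w₁ t * Complex.sin (ρ * t)) * Complex.sin (ρ * a) / ρ
    = Complex.sin (ρ * (1 - (a : ℂ))) / ρ
      - (ω : ℂ) * Complex.cos (ρ * (1 - (a : ℂ))) / (2 * ρ ^ 2)
      + ρ⁻¹ ^ 2 * ∫ t in (a - 1)..(a + 1), w t * Complex.cos (ρ * t) := by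
  have hne : ∀ᵐ x : ℝ, x ≠ a := by
    rw [ae_iff]
    simp only [not_not, setOf_eq_eq_singleton]
    exact Real.volume_singleton
  have hne' : ∀ᵐ x : ℝ, x ≠ a + 1 := by
    rw [ae_iff]
    simp only [not_not, setOf_eq_eq_singleton]
    exact Real.volume_singleton
  set F : ℝ → ℂ := fun s => (w₀ s - w₁ s) / 2 * Complex.cos (ρ * ((a - s : ℝ) : ℂ)) with hFdef
  set G : ℝ → ℂ := fun s => (w₀ s + w₁ s) / 2 * Complex.cos (ρ * ((a + s : ℝ) : ℂ)) with hGdef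
  have cO : Continuous (fun s : ℝ => ((s : ℂ))) := Complex.continuous_ofReal
  have hFi : IntervalIntegrable F volume 0 1 := by
    have hφ : Continuous fun s : ℝ => Complex.cos (ρ * ((a - s : ℝ) : ℂ)) / 2 := by
      fun_prop
    have h := (key_int w₀ hw₀ _ hφ).sub (key_int w₁ hw₁ _ hφ)
    have hEq : F = fun s => w₀ s * (Complex.cos (ρ * ((a - s : ℝ) : ℂ)) / 2)
        - w₁ s * (Complex.cos (ρ * ((a - s : ℝ) : ℂ)) / 2) := by
      funext s; simp only [hFdef]; ring
    rw [hEq]; exact h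
  have hGi : IntervalIntegrable G volume 0 1 := by
    have hφ : Continuous fun s : ℝ => Complex.cos (ρ * ((a + s : ℝ) : ℂ)) / 2 := by
      fun_prop
    have h := (key_int w₀ hw₀ _ hφ).add (key_int w₁ hw₁ _ hφ)
    have hEq : G = fun s => w₀ s * (Complex.cos (ρ * ((a + s : ℝ) : ℂ)) / 2)
        + w₁ s * (Complex.cos (ρ * ((a + s : ℝ) : ℂ)) / 2) := by
      funext s; simp only [hGdef]; ring
    rw [hEq]; exact h
  have h0 : IntervalIntegrable (fun t : ℝ => w₀ t * Complex.cos (ρ * t)) volume 0 1 :=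
    key_int w₀ hw₀ _ (by fun_prop)
  have h1 : IntervalIntegrable (fun t : ℝ => w₁ t * Complex.sin (ρ * t)) volume 0 1 :=
    key_int w₁ hw₁ _ (by fun_prop)
  -- left piece
  have haeL : (fun x : ℝ => F (a - x)) =ᵐ[volume.restrict (Set.Ioc (a-1) a)]
      fun t => w t * Complex.cos (ρ * t) := by
    filter_upwards [ae_restrict_mem measurableSet_Ioc, ae_restrict_of_ae hne] with t ht htne
    rw [hwL t ⟨ht.1, lt_of_le_of_ne ht.2 htne⟩]
    simp [hFdef, sub_sub_cancel]
  have hLii : IntervalIntegrable (fun t => w t * Complex.cos (ρ * t)) volume (a-1) a := by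
    have h := (hFi.comp_sub_left a).symm
    simp only [sub_zero, sub_sub_cancel] at h
    rw [intervalIntegrable_iff_integrableOn_Ioc_of_le (by linarith)] at h ⊢
    exact h.congr haeL
  have hLval : (∫ t in (a-1)..a, w t * Complex.cos (ρ * t)) = ∫ s in (0:ℝ)..1, F s := by
    have h1' : (∫ t in (a-1)..a, w t * Complex.cos (ρ * t))
        = ∫ t in (a-1)..a, F (a - t) := by
      rw [intervalIntegral.integral_of_le (by linarith), intervalIntegral.integral_of_le (by linarith)]
      exact (integral_congr_ae haeL).symm
    rw [h1']
    have := intervalIntegral.integral_comp_sub_left (a := a-1) (b := a) F a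
    simpa using this
  -- right piece
  have haeR : (fun x : ℝ => G (x - a)) =ᵐ[volume.restrict (Set.Ioc a (a+1))]
      fun t => w t * Complex.cos (ρ * t) := by
    filter_upwards [ae_restrict_mem measurableSet_Ioc, ae_restrict_of_ae hne'] with t ht htne
    rw [hwR t ⟨ht.1, lt_of_le_of_ne ht.2 htne⟩]
    simp [hGdef, add_sub_cancel]
  have hRii : IntervalIntegrable (fun t => w t * Complex.cos (ρ * t)) volume a (a+1) := by
    have h := hGi.comp_sub_right a
    simp only [zero_add] at h
    rw [show (1:ℝ) + a = a + 1 from add_comm 1 a] at h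
    rw [intervalIntegrable_iff_integrableOn_Ioc_of_le (by linarith)] at h ⊢
    exact h.congr haeR
  have hRval : (∫ t in a..(a+1), w t * Complex.cos (ρ * t)) = ∫ s in (0:ℝ)..1, G s := by
    have h1' : (∫ t in a..(a+1), w t * Complex.cos (ρ * t))
        = ∫ t in a..(a+1), G (t - a) := by
      rw [intervalIntegral.integral_of_le (by linarith), intervalIntegral.integral_of_le (by linarith)]
      exact (integral_congr_ae haeR).symm
    rw [h1']
    have := intervalIntegral.integral_comp_sub_right (a := a) (b := a+1) G a
    simpa using this
  -- combine
  have hFG : (∫ s in (0:ℝ)..1, F s) + (∫ s in (0:ℝ)..1, G s)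
      = Complex.cos (ρ * a) * (∫ t in (0:ℝ)..1, w₀ t * Complex.cos (ρ * t))
        - Complex.sin (ρ * a) * ∫ t in (0:ℝ)..1, w₁ t * Complex.sin (ρ * t) := by
    rw [← intervalIntegral.integral_add hFi hGi, ← intervalIntegral.integral_const_mul,
      ← intervalIntegral.integral_const_mul,
      ← intervalIntegral.integral_sub (h0.const_mul _) (h1.const_mul _)]
    apply intervalIntegral.integral_congr
    intro s _
    simp only [hFdef, hGdef]
    push_cast
    rw [mul_sub, mul_add, Complex.cos_sub, Complex.cos_add]
    ring
  have hkey : (∫ t in (a-1)..(a+1), w t * Complex.cos (ρ * t))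
      = Complex.cos (ρ * a) * (∫ t in (0:ℝ)..1, w₀ t * Complex.cos (ρ * t))
        - Complex.sin (ρ * a) * ∫ t in (0:ℝ)..1, w₁ t * Complex.sin (ρ * t) := by
    rw [← intervalIntegral.integral_add_adjacent_intervals hLii hRii, hLval, hRval, hFG]
  rw [hkey]
  have h2 : ρ * (1 - (a:ℂ)) = ρ - ρ * a := by ring
  rw [h2, Complex.sin_sub, Complex.cos_sub]
  have hD : ρ * (2 * ρ ^ 2) * ρ ^ 2 ≠ 0 :=
    mul_ne_zero (mul_ne_zero hρ (mul_ne_zero two_ne_zero (pow_ne_zero _ hρ))) (pow_ne_zero _ hρ)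
  have hE : (2:ℂ) * ρ * ρ * ρ ≠ 0 :=
    mul_ne_zero (mul_ne_zero (mul_ne_zero two_ne_zero hρ) hρ) hρ
  simp only [inv_pow, inv_eq_one_div]
  field_simp
  ring
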